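/- Let N ≥ 1 be an integer, let y_1, …, y_N be pairwise distinct real numbers, and let z ∈ ℂ with z ≠ y_i for all i. Then (1/N)·∑_{i=1}^N [∏_{j≠i} (y_i − y_j + 1/N)/(y_i − y_j)] · 1/(z − y_i) = ∏_{i=1}^N (1 + (1/N)·1/(z − y_i)) − 1. -/

import Mathlib

open Polynomial Finset

lemma stmt_0_aux (c P Q R s : ℂ) (hQ : Q ≠ 0) (hR : R ≠ 0) (hs : s ≠ 0) :
    c * (P / Q * (1 / s)) = c * P * (Q⁻¹ * R) / (s * R) := by
  field_simp

set_option maxHeartbeats 1000000 in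
/-- **Lemma 3.2 (Stieltjes transform of the Perelomov–Popov measure).**
For `N ≥ 1`, pairwise distinct reals `y₁, …, y_N` and `z ∈ ℂ` different from all `yᵢ`,
`(1/N)·∑ᵢ [∏_{j≠i} (yᵢ − yⱼ + 1/N)/(yᵢ − yⱼ)] · 1/(z − yᵢ)
  = ∏ᵢ (1 + (1/N)·1/(z − yᵢ)) − 1`. -/
theorem stmt_0 (N : ℕ) (hN : 1 ≤ N) (y : Fin N → ℝ) (hy : Function.Injective y)
    (z : ℂ) (hz : ∀ i, z ≠ (y i : ℂ)) :
    (1 / (N : ℂ)) *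
        ∑ i : Fin N,
          (∏ j ∈ Finset.univ.erase i,
              (((y i : ℂ) - (y j : ℂ) + 1 / (N : ℂ)) / ((y i : ℂ) - (y j : ℂ)))) *
            (1 / (z - (y i : ℂ)))
      = (∏ i : Fin N, (1 + (1 / (N : ℂ)) * (1 / (z - (y i : ℂ))))) - 1 := by
  classical
  set v : Fin N → ℂ := fun i => (y i : ℂ) with hv
  have hvinj : Function.Injective v := fun i j h => hy (Complex.ofReal_inj.mp h)
  have hN0 : (N : ℂ) ≠ 0 := by
    exact_mod_cast Nat.cast_ne_zero.mpr (by omega)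
  have hzv : ∀ i, z - v i ≠ 0 := fun i => sub_ne_zero.mpr (hz i)
  have hvv : ∀ i j : Fin N, i ≠ j → v i - v j ≠ 0 := fun i j h =>
    sub_ne_zero.mpr (fun e => h (hvinj e))
  set g : ℂ[X] := ∏ i : Fin N, (X - C (v i - 1 / (N : ℂ))) with hg
  set p : ℂ[X] := ∏ i : Fin N, (X - C (v i)) with hp
  -- evaluations
  have hgz : g.eval z = ∏ i : Fin N, (z - v i + 1 / (N : ℂ)) := by
    simp [hg, eval_prod]; exact prod_congr rfl fun i _ => by ring
  have hpz : p.eval z = ∏ i : Fin N, (z - v i) := by simp [hp, eval_prod]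
  have hpz0 : p.eval z ≠ 0 := by
    rw [hpz]; exact prod_ne_zero_iff.mpr fun i _ => hzv i
  have hpvi : ∀ i, p.eval (v i) = 0 := by
    intro i
    rw [hp, eval_prod]
    exact prod_eq_zero (mem_univ i) (by simp)
  have hgvi : ∀ i, g.eval (v i) =
      (1 / (N : ℂ)) * ∏ j ∈ Finset.univ.erase i, (v i - v j + 1 / (N : ℂ)) := by
    intro i
    rw [hg, eval_prod, ← Finset.mul_prod_erase _ _ (mem_univ i)]
    congr 1
    · simp
    · exact prod_congr rfl fun j _ => by simp; ring
  -- degree bound for q = g - p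
  have hgm : g.Monic := monic_prod_of_monic _ _ fun i _ => monic_X_sub_C _
  have hpm : p.Monic := monic_prod_of_monic _ _ fun i _ => monic_X_sub_C _
  have hdegg : g.degree = (N : ℕ) := by
    rw [Polynomial.degree_eq_natDegree hgm.ne_zero]
    norm_cast
    rw [hg, Polynomial.natDegree_prod _ _ (fun i _ => X_sub_C_ne_zero _)]
    simp only [natDegree_X_sub_C, Finset.sum_const, Finset.card_univ, Fintype.card_fin,
      smul_eq_mul, mul_one]
  have hdegp : p.degree = (N : ℕ) := by
    rw [Polynomial.degree_eq_natDegree hpm.ne_zero]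
    norm_cast
    rw [hp, Polynomial.natDegree_prod _ _ (fun i _ => X_sub_C_ne_zero _)]
    simp only [natDegree_X_sub_C, Finset.sum_const, Finset.card_univ, Fintype.card_fin,
      smul_eq_mul, mul_one]
  have hdq : (g - p).degree < ((Finset.univ : Finset (Fin N)).card : ℕ) := by
    rcases eq_or_ne g p with h | h
    · simpa [h] using (by exact_mod_cast WithBot.bot_lt_coe (N : ℕ) : (⊥ : WithBot ℕ) < (N : ℕ))
    · have := Polynomial.degree_sub_lt (hdegg.trans hdegp.symm) hgm.ne_zero
        (hgm.leadingCoeff.trans hpm.leadingCoeff.symm)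
      simpa [Finset.card_univ] using this.trans_le hdegg.le
  have hinjOn : Set.InjOn v (Finset.univ : Finset (Fin N)) := hvinj.injOn
  have hinterp := Lagrange.eq_interpolate hinjOn hdq
  have hmain : (g - p).eval z =
      ∑ i : Fin N, (g - p).eval (v i) *
        ∏ j ∈ Finset.univ.erase i, ((v i - v j)⁻¹ * (z - v j)) := by
    conv_lhs => rw [hinterp]
    rw [Lagrange.interpolate_apply, eval_finset_sum]
    refine sum_congr rfl fun i _ => ?_
    rw [eval_mul, eval_C, Lagrange.basis, eval_prod]
    congr 1
    refine prod_congr rfl fun j _ => ?_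
    simp [Lagrange.basisDivisor]
  -- rewrite RHS
  have hRHS : (∏ i : Fin N, (1 + (1 / (N : ℂ)) * (1 / (z - v i)))) - 1
      = (g - p).eval z / p.eval z := by
    have h1 : ∀ i : Fin N, 1 + (1 / (N : ℂ)) * (1 / (z - v i))
        = (z - v i + 1 / (N : ℂ)) / (z - v i) := fun i => by
      rw [eq_div_iff (hzv i), add_mul, one_mul, one_div, one_div, mul_assoc,
        inv_mul_cancel₀ (hzv i), mul_one]
    rw [prod_congr rfl fun i _ => h1 i, prod_div_distrib, eval_sub, hgz, hpz,
      sub_div, div_self (prod_ne_zero_iff.mpr fun i _ => hzv i)]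
  rw [hRHS, hmain, Finset.sum_div, Finset.mul_sum]
  refine sum_congr rfl fun i _ => ?_
  have hpzsplit : p.eval z = (z - v i) * ∏ j ∈ Finset.univ.erase i, (z - v j) := by
    rw [hpz, ← Finset.mul_prod_erase _ _ (mem_univ i)]
  have h2 : ∀ j ∈ Finset.univ.erase i, v i - v j ≠ 0 := fun j hj =>
    hvv i j (Finset.ne_of_mem_erase hj).symm
  have hprodvv : ∏ j ∈ Finset.univ.erase i, (v i - v j) ≠ 0 := prod_ne_zero_iff.mpr h2
  have hprodz : ∏ j ∈ Finset.univ.erase i, (z - v j) ≠ 0 :=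
    prod_ne_zero_iff.mpr fun j _ => hzv j
  rw [eval_sub, hpvi, sub_zero, hgvi, hpzsplit, prod_mul_distrib, prod_inv_distrib,
    prod_div_distrib]
  exact stmt_0_aux _ _ _ _ _ hprodvv hprodz (hzv i)
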